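/- arXiv:2411.04394 — 2 statements merged into one kernel-verified Lean document; each statement's English description precedes it below -/
import Mathlib

section
/- (From traversal avoidance to a risk lower bound, tree version.) Let f*_0 = Σ_{S∈𝒮} α_S χ_S be any function, let f̂ be a regression tree model fit using a regression tree algorithm, let 𝒮' ⊆ 𝒮 be a subcollection, and let T ⊆ {1,…,d} be any set with |T ∩ S| ≥ 2 for each S ∈ 𝒮'. Then the expected L² risk satisfies 𝔯(f̂, f*_0, d, n) ≥ (1 − δ) · Σ_{S∈𝒮'} α_S², where δ := max_{x ∈ {−1,1}^d} P{ J(x; D_n, Θ) ∩ T ≠ ∅ }. -/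
open MeasureTheory ProbabilityTheory

namespace GreedyTrees

/-- The `±1` value of a Boolean coordinate. -/
def sgn (b : Bool) : ℝ := if b then 1 else -1

variable {d n : ℕ}

/-- The Fourier character (monomial) `χ_S` on the Boolean cube `{±1}^d`. -/
def chi (S : Finset (Fin d)) (x : Fin d → Bool) : ℝ := ∏ j ∈ S, sgn (x j)

/-- Expectation with respect to the uniform distribution on `{±1}^d`. -/
noncomputable def cubeMean (f : (Fin d → Bool) → ℝ) : ℝ := (∑ x : Fin d → Bool, f x) / 2 ^ d

/-- The `L²` risk `R(g, f) = E_{X ∼ ν} (g X - f X)²` for `ν` uniform on `{±1}^d`. -/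
noncomputable def cubeRisk (g f : (Fin d → Bool) → ℝ) : ℝ := cubeMean fun x => (g x - f x) ^ 2

/-- Variance with respect to the uniform distribution on `{±1}^d`. -/
noncomputable def cubeVar (f : (Fin d → Bool) → ℝ) : ℝ := cubeMean fun x => (f x - cubeMean f) ^ 2

/-- Supremum norm of a function on the cube. -/
noncomputable def supAbs (f : (Fin d → Bool) → ℝ) : ℝ := ⨆ x, |f x|

/-- Fourier coefficient `α_S` of `f`. -/
noncomputable def fourierCoeff (f : (Fin d → Bool) → ℝ) (S : Finset (Fin d)) : ℝ :=
  cubeMean fun x => f x * chi S x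

open Classical in
/-- Fourier support `𝒮` of `f` : subsets with nonzero Fourier coefficient. -/
noncomputable def fourierSupport (f : (Fin d → Bool) → ℝ) : Finset (Finset (Fin d)) :=
  Finset.univ.filter fun S => fourierCoeff f S ≠ 0

/-- Union of a list of finsets. -/
def listUnion (L : List (Finset (Fin d))) : Finset (Fin d) := L.foldr (· ∪ ·) ∅

/-- Staircase condition: each entry brings in at most one new coordinate. -/
def Staircase (L : List (Finset (Fin d))) : Prop :=
  ∀ (i : ℕ) (h : i < L.length), ((L.get ⟨i, h⟩) \ listUnion (L.take i)).card ≤ 1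

/-- The merged-staircase property (MSP) of a collection of subsets. -/
def MSP (Sc : Finset (Finset (Fin d))) : Prop :=
  ∃ L : List (Finset (Fin d)), L.toFinset = Sc ∧ L.Nodup ∧ Staircase L

/-- `S` is connected to `∅` in the Fourier graph of the collection `Sc`. -/
def ReachesEmpty (Sc : Finset (Finset (Fin d))) (S : Finset (Fin d)) : Prop :=
  ∃ L : List (Finset (Fin d)), (∀ T ∈ L, T ∈ Sc) ∧ S ∈ L ∧ Staircase L

open Classical in
/-- `𝒮_MSP` : the part of the collection connected to `∅` in the Fourier graph. -/
noncomputable def mspPart (Sc : Finset (Finset (Fin d))) : Finset (Finset (Fin d)) :=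
  Sc.filter fun S => ReachesEmpty Sc S

/-- `T` is a traversal of a collection: it meets every member in ≥ 2 coordinates. -/
def IsTraversal (Sc : Finset (Finset (Fin d))) (T : Finset (Fin d)) : Prop :=
  ∀ S ∈ Sc, 2 ≤ (T ∩ S).card

/-- The MSP residual `r_MSP = Σ_{S ∈ 𝒮 \ 𝒮_MSP} α_S χ_S` of `f`. -/
noncomputable def mspResidual (f : (Fin d → Bool) → ℝ) : (Fin d → Bool) → ℝ :=
  fun x => ∑ S ∈ fourierSupport f \ mspPart (fourierSupport f), fourierCoeff f S * chi S x

/-- Total Fourier weight `w(𝒜) = Σ_{S ∈ 𝒜} α_S²` of a collection of vertices. -/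
noncomputable def wt (f : (Fin d → Bool) → ℝ) (A : Finset (Finset (Fin d))) : ℝ :=
  ∑ S ∈ A, fourierCoeff f S ^ 2

/-- The subcube (cell) `{x : x_j = z_j for j ∈ J}` as a finset of points. -/
def subcube (J : Finset (Fin d)) (z : Fin d → Bool) : Finset (Fin d → Bool) :=
  Finset.univ.filter fun x => ∀ j ∈ J, x j = z j

/-- Conditional mean of `f` on a subcube. -/
noncomputable def subcubeMean (f : (Fin d → Bool) → ℝ) (J : Finset (Fin d))
    (z : Fin d → Bool) : ℝ :=
  (∑ x ∈ subcube J z, f x) / (subcube J z).card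

/-- Conditional covariance of `f` and `g` on a subcube. -/
noncomputable def subcubeCov (f g : (Fin d → Bool) → ℝ) (J : Finset (Fin d))
    (z : Fin d → Bool) : ℝ :=
  (∑ x ∈ subcube J z, (f x - subcubeMean f J z) * (g x - subcubeMean g J z)) /
    (subcube J z).card

/-- Conditional variance of `f` on a subcube. -/
noncomputable def subcubeVar (f : (Fin d → Bool) → ℝ) (J : Finset (Fin d))
    (z : Fin d → Bool) : ℝ :=
  subcubeCov f f J z

/-- The restriction of `f` to the subcube `(J, z)` viewed as a function of the
free coordinates. -/
def restrictCube (f : (Fin d → Bool) → ℝ) (J : Finset (Fin d)) (z : Fin d → Bool) :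
    (Fin d → Bool) → ℝ :=
  fun x => f fun j => if j ∈ J then z j else x j

/-- `f` (as a function) satisfies the merged-staircase property. -/
def MSPfun (f : (Fin d → Bool) → ℝ) : Prop := MSP (fourierSupport f)

/-- `f` satisfies the stable merged-staircase property: every restriction to a
subcube satisfies MSP. -/
def SMSPfun (f : (Fin d → Bool) → ℝ) : Prop :=
  ∀ (J : Finset (Fin d)) (z : Fin d → Bool), MSPfun (restrictCube f J z)

/-- `f ∈ SMSP(λ)` : for every subcube on which `f` is nonconstant,
`max_{k ∉ J(C)} Cov²(f(X), X_k | X ∈ C) · 2^{-|J(C) ∩ S*|} ≥ λ`. -/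
def SMSPlam (f : (Fin d → Bool) → ℝ) (Sstar : Finset (Fin d)) (lam : ℝ) : Prop :=
  ∀ (J : Finset (Fin d)) (z : Fin d → Bool),
    (∃ x ∈ subcube J z, ∃ y ∈ subcube J z, f x ≠ f y) →
    ∃ k ∉ J, lam ≤ (subcubeCov f (fun y => sgn (y k)) J z) ^ 2 *
      ((2 : ℝ) ^ (J ∩ Sstar).card)⁻¹

/-- Sub-Gaussian random variable with parameter `σ` (via the MGF bound). -/
def IsSubGaussian {Ω : Type*} [MeasurableSpace Ω] (μ : Measure Ω) (Z : Ω → ℝ)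
    (σ : ℝ) : Prop :=
  ∀ t : ℝ, ∫ ω, Real.exp (t * Z ω) ∂μ ≤ Real.exp (σ ^ 2 * t ^ 2 / 2)

/-- Indices of the samples lying in the cell determined by the values of `x`
on the coordinates in `J`. -/
def cellIdx (X : Fin n → Fin d → Bool) (x : Fin d → Bool) (J : Finset (Fin d)) :
    Finset (Fin n) :=
  Finset.univ.filter fun i => ∀ j ∈ J, X i j = x j

/-- Value of a split criterion `F` at coordinate `k` in a cell: it depends on
the data only through the marginal data `{(X_{ik}, Y_i) : i in the cell}`. -/
def critVal (F : Multiset (Bool × ℝ) → ℝ) (X : Fin n → Fin d → Bool) (Y : Fin n → ℝ)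
    (x : Fin d → Bool) (J : Finset (Fin d)) (k : Fin d) : ℝ :=
  F ((cellIdx X x J).val.map fun i => (X i k, Y i))

/-- Abstract model of a regression tree fitted by a greedy tree algorithm:
for every dataset and query point it records the coordinates split on along the
root-to-leaf path of the query point.  Each split coordinate maximizes a fixed
sign-flip invariant criterion `F` of the marginal data in the current cell,
every split cell contains at least one sample, and the path depends on the
query point only through the coordinates split along it (tree structure). -/
structure GreedyTreeModel (n d : ℕ) where
  F : Multiset (Bool × ℝ) → ℝ
  flip_invariant : ∀ m : Multiset (Bool × ℝ), F (m.map fun p => (!p.1, p.2)) = F m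
  splits : (Fin n → Fin d → Bool) → (Fin n → ℝ) → (Fin d → Bool) → List (Fin d)
  nodup : ∀ X Y x, (splits X Y x).Nodup
  greedy : ∀ X Y x (t : ℕ) (ht : t < (splits X Y x).length) (k : Fin d),
      k ∉ ((splits X Y x).take t).toFinset →
      critVal F X Y x ((splits X Y x).take t).toFinset k ≤
        critVal F X Y x ((splits X Y x).take t).toFinset ((splits X Y x).get ⟨t, ht⟩)
  nonempty_internal : ∀ X Y x (t : ℕ), t < (splits X Y x).length →
      (cellIdx X x ((splits X Y x).take t).toFinset).Nonempty
  consistent : ∀ X Y x x', (∀ j ∈ splits X Y x, x j = x' j) → splits X Y x' = splits X Y x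

/-- The set `J(x; D_n, Θ)` of coordinates split along the query path of `x`. -/
def GreedyTreeModel.queryCoords (M : GreedyTreeModel n d) (X : Fin n → Fin d → Bool)
    (Y : Fin n → ℝ) (x : Fin d → Bool) : Finset (Fin d) :=
  (M.splits X Y x).toFinset

/-- Prediction of the fitted tree: the mean response in the leaf containing `x`. -/
noncomputable def GreedyTreeModel.pred (M : GreedyTreeModel n d)
    (X : Fin n → Fin d → Bool) (Y : Fin n → ℝ) (x : Fin d → Bool) : ℝ :=
  (∑ i ∈ cellIdx X x (M.queryCoords X Y x), Y i) /
    (cellIdx X x (M.queryCoords X Y x)).card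

/-- Mean of a multiset of reals. -/
noncomputable def msetMean (m : Multiset ℝ) : ℝ := m.sum / (m.card : ℝ)

/-- Empirical variance (impurity) of a multiset of reals. -/
noncomputable def msetVar (m : Multiset ℝ) : ℝ :=
  ((m.map fun y => (y - msetMean m) ^ 2).sum) / (m.card : ℝ)

/-- The CART impurity decrease, as a function of the marginal data
`{(X_{ik}, Y_i)}` of a coordinate in a cell. -/
noncomputable def impurityDecrease (m : Multiset (Bool × ℝ)) : ℝ :=
  msetVar (m.map Prod.snd) -
    (((m.filter fun p => p.1 = true).card : ℝ) / (m.card : ℝ)) *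
      msetVar ((m.filter fun p => p.1 = true).map Prod.snd) -
    (((m.filter fun p => p.1 = false).card : ℝ) / (m.card : ℝ)) *
      msetVar ((m.filter fun p => p.1 = false).map Prod.snd)

/-- A CART model: a greedy tree model whose criterion is the impurity decrease,
grown with the minimum impurity decrease stopping rule with threshold `γ`. -/
structure CARTModel (n d : ℕ) (γ : ℝ) extends GreedyTreeModel n d where
  F_eq : F = impurityDecrease
  continue_split : ∀ X Y x (t : ℕ) (ht : t < (splits X Y x).length),
      γ ≤ (((cellIdx X x ((splits X Y x).take t).toFinset).card : ℝ) / (n : ℝ)) *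
        critVal impurityDecrease X Y x ((splits X Y x).take t).toFinset
          ((splits X Y x).get ⟨t, ht⟩)
  stop_leaf : ∀ X Y x (k : Fin d), k ∉ (splits X Y x).toFinset →
      (((cellIdx X x (splits X Y x).toFinset).card : ℝ) / (n : ℝ)) *
        critVal impurityDecrease X Y x (splits X Y x).toFinset k < γ

/-- Number of samples in the subcube `(J, z)`. -/
def cellN (X : Fin n → Fin d → Bool) (J : Finset (Fin d)) (z : Fin d → Bool) : ℕ :=
  (cellIdx X z J).card

/-- Mean response over the samples in the subcube `(J, z)`. -/
noncomputable def cellYbar (X : Fin n → Fin d → Bool) (Y : Fin n → ℝ)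
    (J : Finset (Fin d)) (z : Fin d → Bool) : ℝ :=
  (∑ i ∈ cellIdx X z J, Y i) / (cellN X J z : ℝ)

/-- Empirical square-root impurity decrease
`Δ̂^{1/2}(k; C, D) = √(p_k(C)(1 - p_k(C))) (Ȳ_{T_{k,1}C} - Ȳ_{T_{k,-1}C})`. -/
noncomputable def empSqrtID (X : Fin n → Fin d → Bool) (Y : Fin n → ℝ)
    (J : Finset (Fin d)) (z : Fin d → Bool) (k : Fin d) : ℝ :=
  Real.sqrt (((cellN X (insert k J) (Function.update z k true) : ℝ) / (cellN X J z : ℝ)) *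
      (1 - (cellN X (insert k J) (Function.update z k true) : ℝ) / (cellN X J z : ℝ))) *
    (cellYbar X Y (insert k J) (Function.update z k true) -
      cellYbar X Y (insert k J) (Function.update z k false))

/-- Population square-root impurity decrease
`Δ^{1/2}(k; C) = (E[Y | X ∈ T_{k,1}C] - E[Y | X ∈ T_{k,-1}C]) / 2`
(for zero-mean noise, conditional means of `Y` equal conditional means of `f*`). -/
noncomputable def popSqrtID (f : (Fin d → Bool) → ℝ) (J : Finset (Fin d))
    (z : Fin d → Bool) (k : Fin d) : ℝ :=
  (subcubeMean f (insert k J) (Function.update z k true) -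
    subcubeMean f (insert k J) (Function.update z k false)) / 2

/-- Binary decision tree with axis-aligned splits and real leaf labels. -/
inductive TreeFun (d : ℕ) : Type
  | leaf : ℝ → TreeFun d
  | node : Fin d → TreeFun d → TreeFun d → TreeFun d

/-- Evaluation of a tree as a piecewise constant function on the cube. -/
def TreeFun.eval : TreeFun d → (Fin d → Bool) → ℝ
  | .leaf c, _ => c
  | .node k l r, x => if x k then TreeFun.eval r x else TreeFun.eval l x

/-- Depth of a tree. -/
def TreeFun.depth : TreeFun d → ℕ
  | .leaf _ => 0
  | .node _ l r => max (TreeFun.depth l) (TreeFun.depth r) + 1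

/-- All leaf labels bounded by `M` in absolute value. -/
def TreeFun.leafBound (M : ℝ) : TreeFun d → Prop
  | .leaf c => |c| ≤ M
  | .node _ l r => TreeFun.leafBound M l ∧ TreeFun.leafBound M r

/-- Empirical `L²` risk of a tree on a dataset. -/
noncomputable def empRisk (D : Fin n → (Fin d → Bool) × ℝ) (t : TreeFun d) : ℝ :=
  (∑ i, ((D i).2 - t.eval (D i).1) ^ 2) / n

/-- A greedy tree grown along the query path of a point with every cell being
split (no stopping rule): the path has full length `d`. -/
structure FullGreedyPath (n d : ℕ) where
  F : Multiset (Bool × ℝ) → ℝ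
  flip_invariant : ∀ m : Multiset (Bool × ℝ), F (m.map fun p => (!p.1, p.2)) = F m
  splits : (Fin n → Fin d → Bool) → (Fin n → ℝ) → (Fin d → Bool) → List (Fin d)
  nodup : ∀ X Y x, (splits X Y x).Nodup
  length_eq : ∀ X Y x, (splits X Y x).length = d
  greedy : ∀ X Y x (t : ℕ) (ht : t < (splits X Y x).length) (k : Fin d),
      k ∉ ((splits X Y x).take t).toFinset →
      critVal F X Y x ((splits X Y x).take t).toFinset k ≤
        critVal F X Y x ((splits X Y x).take t).toFinset ((splits X Y x).get ⟨t, ht⟩)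


/-! ### Auxiliary lemmas for Statement 4 -/

section Aux

lemma sgn_mul_self (b : Bool) : sgn b * sgn b = 1 := by cases b <;> norm_num [sgn]

lemma sgn_not (b : Bool) : sgn (!b) = - sgn b := by cases b <;> norm_num [sgn]

/-- Merge: take coordinates in `T` from `a`, remaining ones from `b`. -/
def mrg (T : Finset (Fin d)) (a b : Fin d → Bool) : Fin d → Bool :=
  fun j => if j ∈ T then a j else b j

lemma mrg_mrg (T : Finset (Fin d)) (a a' b : Fin d → Bool) :
    mrg T a (mrg T a' b) = mrg T a b := by
  funext j; by_cases h : j ∈ T <;> simp [mrg, h]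

/-- The swap-merge involution on pairs of cube points. -/
def mrgEquiv (T : Finset (Fin d)) :
    ((Fin d → Bool) × (Fin d → Bool)) ≃ ((Fin d → Bool) × (Fin d → Bool)) where
  toFun p := (mrg T p.1 p.2, mrg T p.2 p.1)
  invFun p := (mrg T p.1 p.2, mrg T p.2 p.1)
  left_inv p := by
    obtain ⟨a, b⟩ := p
    simp only [Prod.mk.injEq]
    constructor <;> funext j <;> by_cases h : j ∈ T <;> simp [mrg, h]
  right_inv p := by
    obtain ⟨a, b⟩ := p
    simp only [Prod.mk.injEq]
    constructor <;> funext j <;> by_cases h : j ∈ T <;> simp [mrg, h]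

lemma sum_mrg (T : Finset (Fin d)) (f : (Fin d → Bool) → ℝ) :
    ∑ a : Fin d → Bool, ∑ b : Fin d → Bool, f (mrg T a b) =
      2 ^ d * ∑ x : Fin d → Bool, f x := by
  have h : ∑ p : (Fin d → Bool) × (Fin d → Bool), f (mrg T p.1 p.2)
      = ∑ p : (Fin d → Bool) × (Fin d → Bool), f p.1 :=
    Equiv.sum_comp (mrgEquiv T) (fun p => f p.1)
  rw [Fintype.sum_prod_type, Fintype.sum_prod_type] at h
  rw [h]
  have hcard : ((Fintype.card (Fin d → Bool) : ℕ) : ℝ) = (2 : ℝ) ^ d := by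
    simp [Fintype.card_fun]
  simp only [Finset.sum_const, Finset.card_univ, nsmul_eq_mul, hcard, Finset.mul_sum]

lemma sum_chi (U : Finset (Fin d)) (hU : U.Nonempty) :
    ∑ x : Fin d → Bool, chi U x = 0 := by
  obtain ⟨j0, hj0⟩ := hU
  have hinv : Function.Involutive
      (fun x : Fin d → Bool => Function.update x j0 (!x j0)) := by
    intro x; funext j
    by_cases h : j = j0
    · subst h; simp
    · simp [Function.update, h]
  have hflip : ∀ x : Fin d → Bool,
      chi U (Function.update x j0 (!x j0)) = - chi U x := by
    intro x
    rw [chi, chi, ← Finset.mul_prod_erase _ _ hj0, ← Finset.mul_prod_erase _ _ hj0]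
    have h1 : ∀ j ∈ U.erase j0,
        sgn (Function.update x j0 (!x j0) j) = sgn (x j) := by
      intro j hj
      rw [Function.update_of_ne (Finset.ne_of_mem_erase hj)]
    rw [Finset.prod_congr rfl h1, Function.update_self, sgn_not]
    ring
  have h : ∑ x : Fin d → Bool, chi U (Function.update x j0 (!x j0))
      = ∑ x : Fin d → Bool, chi U x := by
    simpa using Equiv.sum_comp hinv.toPerm (chi U)
  rw [Finset.sum_congr rfl (fun x _ => hflip x), Finset.sum_neg_distrib] at h
  linarith

lemma chi_mul (S S' : Finset (Fin d)) (x : Fin d → Bool) :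
    chi S x * chi S' x = chi ((S ∪ S') \ (S ∩ S')) x := by
  classical
  rw [chi, chi, chi, ← Finset.prod_union_inter,
    ← Finset.prod_sdiff Finset.inter_subset_union,
    mul_assoc, ← Finset.prod_mul_distrib]
  simp [sgn_mul_self]

lemma sum_chi_mul (S S' : Finset (Fin d)) :
    ∑ x : Fin d → Bool, chi S x * chi S' x = if S = S' then (2:ℝ) ^ d else 0 := by
  classical
  simp_rw [chi_mul]
  by_cases h : S = S'
  · subst h
    have : (S ∪ S) \ (S ∩ S) = ∅ := by simp
    rw [this, if_pos rfl]
    have hcard : ((Fintype.card (Fin d → Bool) : ℕ) : ℝ) = (2 : ℝ) ^ d := by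
      simp [Fintype.card_fun]
    simp [chi, Finset.card_univ, hcard]
  · rw [if_neg h]
    apply sum_chi
    rw [Finset.nonempty_iff_ne_empty]
    intro he
    have hsub : S ∪ S' ⊆ S ∩ S' := Finset.sdiff_eq_empty_iff_subset.mp he
    exact h (Finset.Subset.antisymm
      (fun a ha => (Finset.mem_inter.mp (hsub (Finset.mem_union_left _ ha))).2)
      (fun a ha => (Finset.mem_inter.mp (hsub (Finset.mem_union_right _ ha))).1))

lemma chi_mrg (T S : Finset (Fin d)) (a b : Fin d → Bool) :
    chi S (mrg T a b) = chi (S ∩ T) a * chi (S \ T) b := by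
  classical
  have h1 : ∀ j ∈ S ∩ T, sgn (mrg T a b j) = sgn (a j) := by
    intro j hj
    have : j ∈ T := (Finset.mem_inter.mp hj).2
    simp [mrg, this]
  have h2 : ∀ j ∈ S \ T, sgn (mrg T a b j) = sgn (b j) := by
    intro j hj
    have : j ∉ T := (Finset.mem_sdiff.mp hj).2
    simp [mrg, this]
  rw [chi, ← Finset.prod_filter_mul_prod_filter_not S (· ∈ T)
      (fun j => sgn (mrg T a b j)), Finset.filter_mem_eq_inter,
      ← Finset.sdiff_eq_filter]
  rw [Finset.prod_congr rfl h1, Finset.prod_congr rfl h2]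
  rfl

lemma sum_mul_sum_chi (g : (Fin d → Bool) → ℝ) (A : Finset (Finset (Fin d)))
    (c : Finset (Fin d) → ℝ) :
    ∑ x : Fin d → Bool, g x * (∑ S ∈ A, c S * chi S x)
      = ∑ S ∈ A, c S * (∑ x : Fin d → Bool, g x * chi S x) := by
  simp_rw [Finset.mul_sum]
  rw [Finset.sum_comm]
  exact Finset.sum_congr rfl fun S _ =>
    Finset.sum_congr rfl fun x _ => by ring

lemma sum_sq_sum_chi (A : Finset (Finset (Fin d))) (c : Finset (Fin d) → ℝ) :
    ∑ x : Fin d → Bool, (∑ S ∈ A, c S * chi S x) ^ 2 = 2 ^ d * ∑ S ∈ A, c S ^ 2 := by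
  classical
  simp_rw [sq, Finset.sum_mul_sum]
  rw [Finset.sum_comm]
  have key : ∀ S ∈ A, ∑ x : Fin d → Bool, ∑ S' ∈ A,
      (c S * chi S x) * (c S' * chi S' x) = 2 ^ d * c S ^ 2 := by
    intro S hS
    rw [Finset.sum_comm]
    have h2 : ∀ S' ∈ A, ∑ x : Fin d → Bool, (c S * chi S x) * (c S' * chi S' x)
        = (if S = S' then c S * c S' * 2 ^ d else 0) := by
      intro S' _
      have : ∑ x : Fin d → Bool, (c S * chi S x) * (c S' * chi S' x)
          = c S * c S' * ∑ x : Fin d → Bool, chi S x * chi S' x := by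
        rw [Finset.mul_sum]
        exact Finset.sum_congr rfl fun x _ => by ring
      rw [this, sum_chi_mul]
      split <;> ring
    rw [Finset.sum_congr rfl h2, Finset.sum_ite_eq A S (fun S' => c S * c S' * 2 ^ d),
      if_pos hS]
    ring
  rw [Finset.sum_congr rfl key, ← Finset.mul_sum]
  simp [sq]

lemma bessel' (g : (Fin d → Bool) → ℝ) (A : Finset (Finset (Fin d))) :
    ∑ S ∈ A, (∑ x : Fin d → Bool, g x * chi S x) ^ 2
      ≤ 2 ^ d * ∑ x : Fin d → Bool, g x ^ 2 := by
  classical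
  have hN : (0:ℝ) < 2 ^ d := by positivity
  set c : Finset (Fin d) → ℝ :=
    fun S => (∑ x : Fin d → Bool, g x * chi S x) / 2 ^ d with hc
  have hpos : 0 ≤ ∑ x : Fin d → Bool, (g x - ∑ S ∈ A, c S * chi S x) ^ 2 :=
    Finset.sum_nonneg fun x _ => sq_nonneg _
  have hexp : ∑ x : Fin d → Bool, (g x - ∑ S ∈ A, c S * chi S x) ^ 2
      = ∑ x : Fin d → Bool, g x ^ 2
        - 2 * ∑ S ∈ A, c S * (∑ x : Fin d → Bool, g x * chi S x)
        + 2 ^ d * ∑ S ∈ A, c S ^ 2 := by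
    have hx : ∀ x : Fin d → Bool, (g x - ∑ S ∈ A, c S * chi S x) ^ 2
        = g x ^ 2 - 2 * (g x * ∑ S ∈ A, c S * chi S x)
          + (∑ S ∈ A, c S * chi S x) ^ 2 := fun x => by ring
    rw [Finset.sum_congr rfl fun x _ => hx x, Finset.sum_add_distrib,
      Finset.sum_sub_distrib, sum_sq_sum_chi A c, ← Finset.mul_sum,
      sum_mul_sum_chi g A c]
  have h1 : ∑ S ∈ A, c S * (∑ x : Fin d → Bool, g x * chi S x)
      = (∑ S ∈ A, (∑ x : Fin d → Bool, g x * chi S x) ^ 2) / 2 ^ d := by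
    rw [Finset.sum_div]
    refine Finset.sum_congr rfl fun S _ => ?_
    simp only [hc]
    ring
  have h2 : (2:ℝ) ^ d * ∑ S ∈ A, c S ^ 2
      = (∑ S ∈ A, (∑ x : Fin d → Bool, g x * chi S x) ^ 2) / 2 ^ d := by
    rw [Finset.mul_sum, Finset.sum_div]
    refine Finset.sum_congr rfl fun S _ => ?_
    simp only [hc]
    field_simp
  rw [hexp, h1, h2] at hpos
  have h3 : (∑ S ∈ A, (∑ x : Fin d → Bool, g x * chi S x) ^ 2) / 2 ^ d
      ≤ ∑ x : Fin d → Bool, g x ^ 2 := by linarith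
  have := (div_le_iff₀ hN).mp h3
  linarith

lemma sum_sq_mean_le {ι : Type} [Fintype ι] (y : ι → ℝ) (c : ℝ) :
    ∑ i, ((∑ j, y j) / (Fintype.card ι : ℝ) - y i) ^ 2 ≤ ∑ i, (c - y i) ^ 2 := by
  rcases isEmpty_or_nonempty ι with h | h
  · simp
  set N : ℝ := (Fintype.card ι : ℝ) with hNdef
  have hN : 0 < N := by rw [hNdef]; exact_mod_cast (Fintype.card_pos : 0 < Fintype.card ι)
  set m : ℝ := (∑ j, y j) / N with hm
  have hsum : ∑ j, y j = N * m := by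
    rw [hm]; field_simp
  have key : ∑ i, (c - y i) ^ 2 - ∑ i, (m - y i) ^ 2 = N * (c - m) ^ 2 := by
    rw [← Finset.sum_sub_distrib]
    have hx : ∀ i : ι, (c - y i) ^ 2 - (m - y i) ^ 2
        = (c ^ 2 - m ^ 2) - (2 * (c - m)) * y i := fun i => by ring
    rw [Finset.sum_congr rfl fun i _ => hx i, Finset.sum_sub_distrib,
      Finset.sum_const, ← Finset.mul_sum, hsum, Finset.card_univ, nsmul_eq_mul,
      ← hNdef]
    ring
  nlinarith [mul_nonneg hN.le (sq_nonneg (c - m))]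

/-- The conditional mean of `f0` given the coordinates outside `T`. -/
noncomputable def mfun (T : Finset (Fin d)) (f0 : (Fin d → Bool) → ℝ) :
    (Fin d → Bool) → ℝ :=
  fun x => (∑ a : Fin d → Bool, f0 (mrg T a x)) / 2 ^ d

/-- Unnormalized conditional variance of `f0` on the `T`-fiber of `b`. -/
noncomputable def Vfun (T : Finset (Fin d)) (f0 : (Fin d → Bool) → ℝ) :
    (Fin d → Bool) → ℝ :=
  fun b => ∑ a : Fin d → Bool, (mfun T f0 b - f0 (mrg T a b)) ^ 2

lemma Vfun_nonneg (T : Finset (Fin d)) (f0 : (Fin d → Bool) → ℝ)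
    (b : Fin d → Bool) : 0 ≤ Vfun T f0 b :=
  Finset.sum_nonneg fun _ _ => sq_nonneg _

lemma mfun_mrg (T : Finset (Fin d)) (f0 : (Fin d → Bool) → ℝ)
    (a b : Fin d → Bool) : mfun T f0 (mrg T a b) = mfun T f0 b := by
  rw [mfun, mfun]
  congr 1
  exact Finset.sum_congr rfl fun a' _ => by rw [mrg_mrg]

/-- The residual `f0 - E[f0 | coords outside T]`. -/
noncomputable def gfun (T : Finset (Fin d)) (f0 : (Fin d → Bool) → ℝ) :
    (Fin d → Bool) → ℝ :=
  fun x => f0 x - mfun T f0 x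

/-- Claim C : total conditional variance dominates the Fourier weight of any
collection whose members all meet `T`. -/
lemma claimC (f0 : (Fin d → Bool) → ℝ) (T : Finset (Fin d))
    (Sc' : Finset (Finset (Fin d))) (hT : ∀ S ∈ Sc', (S ∩ T).Nonempty) :
    (2:ℝ) ^ d * ((2:ℝ) ^ d * ∑ S ∈ Sc', fourierCoeff f0 S ^ 2)
      ≤ ∑ b : Fin d → Bool, Vfun T f0 b := by
  classical
  have hN : (0:ℝ) < 2 ^ d := by positivity
  have hRHS : ∑ b : Fin d → Bool, Vfun T f0 b
      = 2 ^ d * ∑ x : Fin d → Bool, gfun T f0 x ^ 2 := by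
    have h1 : ∀ b a : Fin d → Bool,
        (mfun T f0 b - f0 (mrg T a b)) ^ 2 = (gfun T f0 (mrg T a b)) ^ 2 := by
      intro b a
      simp only [gfun]
      rw [mfun_mrg]
      ring
    calc ∑ b : Fin d → Bool, Vfun T f0 b
        = ∑ b : Fin d → Bool, ∑ a : Fin d → Bool, (gfun T f0 (mrg T a b)) ^ 2 :=
          Finset.sum_congr rfl fun b _ =>
            Finset.sum_congr rfl fun a _ => h1 b a
      _ = ∑ a : Fin d → Bool, ∑ b : Fin d → Bool, (gfun T f0 (mrg T a b)) ^ 2 :=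
          Finset.sum_comm
      _ = 2 ^ d * ∑ x : Fin d → Bool, gfun T f0 x ^ 2 :=
          sum_mrg T fun x => gfun T f0 x ^ 2
  have hcoeff : ∀ S ∈ Sc',
      ∑ x : Fin d → Bool, gfun T f0 x * chi S x = 2 ^ d * fourierCoeff f0 S := by
    intro S hS
    have hzero : ∑ x : Fin d → Bool, mfun T f0 x * chi S x = 0 := by
      have h2 : ∑ a : Fin d → Bool, ∑ b : Fin d → Bool,
          mfun T f0 (mrg T a b) * chi S (mrg T a b)
          = 2 ^ d * ∑ x : Fin d → Bool, mfun T f0 x * chi S x :=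
        sum_mrg T fun x => mfun T f0 x * chi S x
      have h3 : ∑ a : Fin d → Bool, ∑ b : Fin d → Bool,
          mfun T f0 (mrg T a b) * chi S (mrg T a b) = 0 := by
        rw [Finset.sum_comm]
        refine Finset.sum_eq_zero fun b _ => ?_
        have hsplit : ∀ a : Fin d → Bool,
            mfun T f0 (mrg T a b) * chi S (mrg T a b)
            = (mfun T f0 b * chi (S \ T) b) * chi (S ∩ T) a := by
          intro a
          rw [mfun_mrg, chi_mrg]
          ring
        rw [Finset.sum_congr rfl fun a _ => hsplit a, ← Finset.mul_sum,
          sum_chi _ (hT S hS), mul_zero]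
      rw [h3] at h2
      exact (mul_eq_zero.mp h2.symm).resolve_left
        (ne_of_gt (by positivity : (0:ℝ) < (2:ℝ) ^ d))
    have hsub : ∑ x : Fin d → Bool, gfun T f0 x * chi S x
        = ∑ x : Fin d → Bool, f0 x * chi S x := by
      simp only [gfun, sub_mul]
      rw [Finset.sum_sub_distrib, hzero, sub_zero]
    rw [hsub, fourierCoeff, cubeMean]
    field_simp
  have hb := bessel' (gfun T f0) Sc'
  rw [Finset.sum_congr rfl (fun S hS => by rw [hcoeff S hS])] at hb
  have hbb : ∑ S ∈ Sc', ((2:ℝ) ^ d * fourierCoeff f0 S) ^ 2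
      = (2:ℝ) ^ d * ((2:ℝ) ^ d * ∑ S ∈ Sc', fourierCoeff f0 S ^ 2) := by
    rw [Finset.mul_sum, Finset.mul_sum]
    exact Finset.sum_congr rfl fun S _ => by ring
  rw [hbb] at hb
  linarith [hRHS, hb]

/-- Claim A : pointwise (in the data) lower bound on the risk. -/
lemma claimA (f0 fh : (Fin d → Bool) → ℝ) (T : Finset (Fin d))
    (E : (Fin d → Bool) → Prop) [DecidablePred E]
    (hloc' : ∀ b a, ¬ E b → fh (mrg T a b) = fh b) :
    ∑ b : Fin d → Bool, (if E b then (0:ℝ) else 1) * Vfun T f0 b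
      ≤ 2 ^ d * (2 ^ d * cubeRisk fh f0) := by
  classical
  have hN : (0:ℝ) < 2 ^ d := by positivity
  have hcard : ((Fintype.card (Fin d → Bool) : ℕ) : ℝ) = (2 : ℝ) ^ d := by
    simp [Fintype.card_fun]
  have hRHS : (2:ℝ) ^ d * (2 ^ d * cubeRisk fh f0)
      = ∑ b : Fin d → Bool, ∑ a : Fin d → Bool,
          (fh (mrg T a b) - f0 (mrg T a b)) ^ 2 := by
    calc (2:ℝ) ^ d * (2 ^ d * cubeRisk fh f0)
        = 2 ^ d * ∑ x : Fin d → Bool, (fh x - f0 x) ^ 2 := by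
          rw [cubeRisk, cubeMean]; field_simp
      _ = ∑ a : Fin d → Bool, ∑ b : Fin d → Bool,
            (fh (mrg T a b) - f0 (mrg T a b)) ^ 2 := (sum_mrg T _).symm
      _ = ∑ b : Fin d → Bool, ∑ a : Fin d → Bool,
            (fh (mrg T a b) - f0 (mrg T a b)) ^ 2 := Finset.sum_comm
  rw [hRHS]
  refine Finset.sum_le_sum fun b _ => ?_
  by_cases hb : E b
  · rw [if_pos hb, zero_mul]
    exact Finset.sum_nonneg fun _ _ => sq_nonneg _
  · rw [if_neg hb, one_mul]
    have hmean := sum_sq_mean_le (fun a : Fin d → Bool => f0 (mrg T a b)) (fh b)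
    calc Vfun T f0 b
        = ∑ a : Fin d → Bool,
            ((∑ a' : Fin d → Bool, f0 (mrg T a' b)) / (Fintype.card (Fin d → Bool) : ℝ)
              - f0 (mrg T a b)) ^ 2 := by
          refine Finset.sum_congr rfl fun a _ => ?_
          rw [mfun, hcard]
      _ ≤ ∑ a : Fin d → Bool, (fh b - f0 (mrg T a b)) ^ 2 := hmean
      _ = ∑ a : Fin d → Bool, (fh (mrg T a b) - f0 (mrg T a b)) ^ 2 :=
          Finset.sum_congr rfl fun a _ => by rw [hloc' b a hb]

end Aux

/-- From traversal avoidance to a risk lower bound, tree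
version.  For any regression tree model `fhat` (with query-path split sets
`Jq`), any subcollection `𝒮' ⊆ 𝒮` and any `T` with `|T ∩ S| ≥ 2` for all
`S ∈ 𝒮'`, the expected `L²` risk is at least `(1 - δ) Σ_{S ∈ 𝒮'} α_S²`, where
`δ := max_x P{J(x; D_n, Θ) ∩ T ≠ ∅}`. -/
theorem traversal_avoidance_risk_lower_bound_tree
    {Ω : Type} [MeasurableSpace Ω]
    (μ : Measure Ω) [IsProbabilityMeasure μ]
    (d n s : ℕ)
    (X : Fin n → Ω → Fin d → Bool) (eps : Fin n → Ω → ℝ) (Y : Fin n → Ω → ℝ)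
    (hXmeas : ∀ i, Measurable (X i)) (hepsmeas : ∀ i, Measurable (eps i))
    (hXunif : ∀ i, Measure.map (X i) μ = (PMF.uniformOfFintype (Fin d → Bool)).toMeasure)
    (hXiid : iIndepFun X μ)
    (hepsiid : iIndepFun eps μ)
    (hepsident : ∀ i j, Measure.map (eps i) μ = Measure.map (eps j) μ)
    (hepsint : ∀ i, Integrable (eps i) μ)
    (hepsmean : ∀ i, ∫ ω, eps i ω ∂μ = 0)
    (hXeps : IndepFun (fun ω i => X i ω) (fun ω i => eps i ω) μ)
    (Sstar : Finset (Fin d)) (hcard : Sstar.card = s)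
    (f0 : (Fin d → Bool) → ℝ)
    (hsparse : ∀ x x' : Fin d → Bool, (∀ j ∈ Sstar, x j = x' j) → f0 x = f0 x')
    (hY : ∀ i ω, Y i ω = f0 (X i ω) + eps i ω)
    -- the fitted regression tree model and its query-path split coordinates
    (fhat : Ω → (Fin d → Bool) → ℝ)
    (Jq : Ω → (Fin d → Bool) → Finset (Fin d))
    (Sc' : Finset (Finset (Fin d))) (hSc' : Sc' ⊆ fourierSupport f0)
    (T : Finset (Fin d)) (hT : ∀ S ∈ Sc', 2 ≤ (T ∩ S).card)
    (hfmeas : ∀ x, Measurable fun ω => fhat ω x)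
    (hJmeas : ∀ x, MeasurableSet {ω | ((Jq ω x) ∩ T).Nonempty})
    -- on the event `J(x) ∩ T = ∅` the prediction does not change when the
    -- coordinates of `x` in `T` are changed
    (hloc : ∀ ω x x', ¬ ((Jq ω x) ∩ T).Nonempty → (∀ j, j ∉ T → x j = x' j) →
        fhat ω x = fhat ω x')
    -- the event depends on `x` only through `x_{[d] ∖ T}`
    (hev : ∀ ω x x', (∀ j, j ∉ T → x j = x' j) →
        (((Jq ω x) ∩ T).Nonempty ↔ ((Jq ω x') ∩ T).Nonempty))
    (δ : ℝ) (hδ : ∀ x, (μ {ω | ((Jq ω x) ∩ T).Nonempty}).toReal ≤ δ) :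
    ENNReal.ofReal ((1 - δ) * ∑ S ∈ Sc', fourierCoeff f0 S ^ 2) ≤
      ∫⁻ ω, ENNReal.ofReal (cubeRisk (fhat ω) f0) ∂μ := by
  classical
  set W : ℝ := ∑ S ∈ Sc', fourierCoeff f0 S ^ 2 with hWdef
  rcases le_or_gt ((1 - δ) * W) 0 with h0 | h0
  · rw [ENNReal.ofReal_eq_zero.mpr h0]
    exact zero_le
  have hW : 0 ≤ W := Finset.sum_nonneg fun _ _ => sq_nonneg _
  have hδ1 : 0 < 1 - δ := by nlinarith [h0, hW]
  have hδ0 : 0 ≤ δ := le_trans ENNReal.toReal_nonneg (hδ (fun _ => true))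
  have hN : (0:ℝ) < 2 ^ d := by positivity
  have hT' : ∀ S ∈ Sc', (S ∩ T).Nonempty := by
    intro S hS
    rw [Finset.inter_comm]
    exact Finset.card_pos.mp (lt_of_lt_of_le (by norm_num) (hT S hS))
  have hconst : ∀ ω (b a : Fin d → Bool), ¬ ((Jq ω b) ∩ T).Nonempty →
      fhat ω (mrg T a b) = fhat ω b := by
    intro ω b a hb
    have hagree : ∀ j, j ∉ T → mrg T a b j = b j := fun j hj => if_neg hj
    exact hloc ω (mrg T a b) b
      (fun hcon => hb ((hev ω (mrg T a b) b hagree).mp hcon)) hagree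
  have claimA' : ∀ ω,
      (∑ b : Fin d → Bool,
        (if ((Jq ω b) ∩ T).Nonempty then (0:ℝ) else 1) * Vfun T f0 b)
        / (2 ^ d * 2 ^ d) ≤ cubeRisk (fhat ω) f0 := by
    intro ω
    rw [div_le_iff₀ (by positivity)]
    calc (∑ b : Fin d → Bool,
          (if ((Jq ω b) ∩ T).Nonempty then (0:ℝ) else 1) * Vfun T f0 b)
        ≤ 2 ^ d * (2 ^ d * cubeRisk (fhat ω) f0) :=
          claimA f0 (fhat ω) T (fun b => ((Jq ω b) ∩ T).Nonempty) (hconst ω)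
      _ = cubeRisk (fhat ω) f0 * (2 ^ d * 2 ^ d) := by ring
  set C : ENNReal := ENNReal.ofReal (((2:ℝ) ^ d * 2 ^ d)⁻¹) with hC
  have hsplit : ∀ ω, ENNReal.ofReal
      ((∑ b : Fin d → Bool,
        (if ((Jq ω b) ∩ T).Nonempty then (0:ℝ) else 1) * Vfun T f0 b)
        / (2 ^ d * 2 ^ d))
      = (∑ b : Fin d → Bool, ENNReal.ofReal
          ((if ((Jq ω b) ∩ T).Nonempty then (0:ℝ) else 1) * Vfun T f0 b)) * C := by
    intro ω
    have hnn : ∀ b : Fin d → Bool, 0 ≤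
        (if ((Jq ω b) ∩ T).Nonempty then (0:ℝ) else 1) * Vfun T f0 b :=
      fun b => mul_nonneg (by split <;> norm_num) (Vfun_nonneg T f0 b)
    rw [div_eq_mul_inv,
      ENNReal.ofReal_mul (Finset.sum_nonneg fun b _ => hnn b),
      ENNReal.ofReal_sum_of_nonneg (fun b _ => hnn b)]
  have hFind : ∀ b : Fin d → Bool,
      (fun ω => ENNReal.ofReal
        ((if ((Jq ω b) ∩ T).Nonempty then (0:ℝ) else 1) * Vfun T f0 b))
      = Set.indicator ({ω | ((Jq ω b) ∩ T).Nonempty}ᶜ)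
          (fun _ => ENNReal.ofReal (Vfun T f0 b)) := by
    intro b
    funext ω
    by_cases hb : ((Jq ω b) ∩ T).Nonempty
    · simp [Set.indicator_apply, hb]
    · simp [Set.indicator_apply, hb]
  have hinteg : ∀ b : Fin d → Bool,
      ∫⁻ ω, ENNReal.ofReal
        ((if ((Jq ω b) ∩ T).Nonempty then (0:ℝ) else 1) * Vfun T f0 b) ∂μ
      = ENNReal.ofReal (Vfun T f0 b) * μ ({ω | ((Jq ω b) ∩ T).Nonempty}ᶜ) := by
    intro b
    rw [hFind b]
    exact lintegral_indicator_const (hJmeas b).compl _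
  have hFmeas : ∀ b : Fin d → Bool, Measurable (fun ω => ENNReal.ofReal
      ((if ((Jq ω b) ∩ T).Nonempty then (0:ℝ) else 1) * Vfun T f0 b)) := by
    intro b
    rw [hFind b]
    exact Measurable.indicator measurable_const (hJmeas b).compl
  have hμb : ∀ b : Fin d → Bool,
      ENNReal.ofReal (1 - δ) ≤ μ ({ω | ((Jq ω b) ∩ T).Nonempty}ᶜ) := by
    intro b
    rw [prob_compl_eq_one_sub (hJmeas b)]
    have h1 : μ {ω | ((Jq ω b) ∩ T).Nonempty} ≤ ENNReal.ofReal δ := by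
      rw [← ENNReal.ofReal_toReal (measure_ne_top μ _)]
      exact ENNReal.ofReal_le_ofReal (hδ b)
    calc ENNReal.ofReal (1 - δ)
        = ENNReal.ofReal 1 - ENNReal.ofReal δ := ENNReal.ofReal_sub 1 hδ0
      _ = 1 - ENNReal.ofReal δ := by rw [ENNReal.ofReal_one]
      _ ≤ 1 - μ {ω | ((Jq ω b) ∩ T).Nonempty} := tsub_le_tsub_left h1 1
  have hWle : W ≤ (∑ b : Fin d → Bool, Vfun T f0 b) * ((2:ℝ) ^ d * 2 ^ d)⁻¹ := by
    have hc := claimC f0 T Sc' hT'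
    rw [← hWdef] at hc
    rw [← div_eq_mul_inv, le_div_iff₀ (by positivity)]
    nlinarith [hc]
  calc ENNReal.ofReal ((1 - δ) * W)
      = ENNReal.ofReal (1 - δ) * ENNReal.ofReal W := ENNReal.ofReal_mul hδ1.le
    _ ≤ ENNReal.ofReal (1 - δ) * ENNReal.ofReal
          ((∑ b : Fin d → Bool, Vfun T f0 b) * ((2:ℝ) ^ d * 2 ^ d)⁻¹) :=
        mul_le_mul_right (ENNReal.ofReal_le_ofReal hWle) _
    _ = ENNReal.ofReal (1 - δ) *
          ((∑ b : Fin d → Bool, ENNReal.ofReal (Vfun T f0 b)) * C) := by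
        rw [ENNReal.ofReal_mul (Finset.sum_nonneg fun b _ => Vfun_nonneg T f0 b),
          ENNReal.ofReal_sum_of_nonneg (fun b _ => Vfun_nonneg T f0 b)]
    _ = (∑ b : Fin d → Bool,
          ENNReal.ofReal (Vfun T f0 b) * ENNReal.ofReal (1 - δ)) * C := by
        have hcomm : ∑ b : Fin d → Bool,
            ENNReal.ofReal (Vfun T f0 b) * ENNReal.ofReal (1 - δ)
            = ENNReal.ofReal (1 - δ) *
              ∑ b : Fin d → Bool, ENNReal.ofReal (Vfun T f0 b) := by
          rw [Finset.mul_sum]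
          exact Finset.sum_congr rfl fun b _ => mul_comm _ _
        rw [hcomm, ← mul_assoc]
    _ ≤ (∑ b : Fin d → Bool,
          ENNReal.ofReal (Vfun T f0 b) * μ ({ω | ((Jq ω b) ∩ T).Nonempty}ᶜ)) * C :=
        mul_le_mul_left
          (Finset.sum_le_sum fun b _ => mul_le_mul_right (hμb b) _) _
    _ = (∑ b : Fin d → Bool, ∫⁻ ω, ENNReal.ofReal
          ((if ((Jq ω b) ∩ T).Nonempty then (0:ℝ) else 1) * Vfun T f0 b) ∂μ) * C := by
        rw [Finset.sum_congr rfl fun b _ => (hinteg b).symm]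
    _ = (∫⁻ ω, ∑ b : Fin d → Bool, ENNReal.ofReal
          ((if ((Jq ω b) ∩ T).Nonempty then (0:ℝ) else 1) * Vfun T f0 b) ∂μ) * C := by
        rw [lintegral_finset_sum _ fun b _ => hFmeas b]
    _ = ∫⁻ ω, (∑ b : Fin d → Bool, ENNReal.ofReal
          ((if ((Jq ω b) ∩ T).Nonempty then (0:ℝ) else 1) * Vfun T f0 b)) * C ∂μ :=
        (lintegral_mul_const' C _ ENNReal.ofReal_ne_top).symm
    _ = ∫⁻ ω, ENNReal.ofReal
          ((∑ b : Fin d → Bool,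
            (if ((Jq ω b) ∩ T).Nonempty then (0:ℝ) else 1) * Vfun T f0 b)
            / (2 ^ d * 2 ^ d)) ∂μ := by
        refine lintegral_congr fun ω => (hsplit ω).symm
    _ ≤ ∫⁻ ω, ENNReal.ofReal (cubeRisk (fhat ω) f0) ∂μ :=
        lintegral_mono fun ω => ENNReal.ofReal_le_ofReal (claimA' ω)

end GreedyTrees
end

section
/- (Covariate selection is necessary for small risk, tree version.) Let f̂ be a regression tree model fit using a regression tree algorithm. Then the expected L² risk satisfies 𝔯(f̂, f*_0, d, n) ≥ (1 − δ)·Var(f*_0(X)), where δ := P{ J(X; D_n, Θ) ∩ S* ≠ ∅ }, the probability being over X ∼ ν independent of (D_n, Θ). -/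
open MeasureTheory ProbabilityTheory

namespace GreedyTrees

variable {d n : ℕ}

section Helpers
variable {d : ℕ}

lemma cubeMean_const (c : ℝ) : cubeMean (fun _ : Fin d → Bool => c) = c := by
  simp only [cubeMean, Finset.sum_const, Finset.card_univ, Fintype.card_fun,
    Fintype.card_bool, Fintype.card_fin, nsmul_eq_mul, Nat.cast_pow, Nat.cast_ofNat]
  rw [mul_comm, mul_div_assoc, div_self (by positivity : ((2:ℝ)^d) ≠ 0), mul_one]

lemma cubeMean_add (f g : (Fin d → Bool) → ℝ) :
    cubeMean (fun x => f x + g x) = cubeMean f + cubeMean g := by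
  simp [cubeMean, Finset.sum_add_distrib, add_div]

lemma cubeMean_sub (f g : (Fin d → Bool) → ℝ) :
    cubeMean (fun x => f x - g x) = cubeMean f - cubeMean g := by
  have := cubeMean_add (fun x => f x - g x) g
  simp only [sub_add_cancel] at this; linarith

lemma cubeMean_mul_const (f : (Fin d → Bool) → ℝ) (c : ℝ) :
    cubeMean (fun x => f x * c) = cubeMean f * c := by
  simp only [cubeMean, ← Finset.sum_mul]
  ring

lemma cubeMean_mono {f g : (Fin d → Bool) → ℝ} (h : ∀ x, f x ≤ g x) :
    cubeMean f ≤ cubeMean g := by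
  unfold cubeMean
  gcongr
  exact h _

lemma cubeMean_nonneg {f : (Fin d → Bool) → ℝ} (h : ∀ x, 0 ≤ f x) : 0 ≤ cubeMean f := by
  have : (0:ℝ) ≤ ∑ x : Fin d → Bool, f x := Finset.sum_nonneg fun x _ => h x
  exact div_nonneg this (by positivity)

lemma cubeVar_nonneg (f : (Fin d → Bool) → ℝ) : 0 ≤ cubeVar f :=
  cubeMean_nonneg fun x => sq_nonneg _

lemma var_le_mean_sq (f : (Fin d → Bool) → ℝ) (c : ℝ) :
    cubeVar f ≤ cubeMean (fun y => (c - f y) ^ 2) := by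
  have key : ∀ y, (c - f y) ^ 2 = (f y - cubeMean f) ^ 2
      + ((f y - cubeMean f) * (2 * (cubeMean f - c)) + (cubeMean f - c) ^ 2) := by
    intro y; ring
  calc cubeVar f ≤ cubeVar f + (cubeMean f - c)^2 := le_add_of_nonneg_right (sq_nonneg _)
    _ = cubeMean (fun y => (c - f y)^2) := by
        have keq : (fun y => (c - f y)^2) = fun y => (f y - cubeMean f) ^ 2
            + ((f y - cubeMean f) * (2 * (cubeMean f - c)) + (cubeMean f - c) ^ 2) :=
          funext key
        rw [keq, cubeMean_add]
        have h1 : cubeMean (fun y => (f y - cubeMean f) * (2 * (cubeMean f - c)) + (cubeMean f - c)^2)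
            = cubeMean (fun y => (f y - cubeMean f)) * (2 * (cubeMean f - c)) + (cubeMean f - c)^2 := by
          rw [cubeMean_add, cubeMean_mul_const, cubeMean_const]
        have h2 : cubeMean (fun y => f y - cubeMean f) = 0 := by
          rw [cubeMean_sub, cubeMean_const, sub_self]
        rw [h1, h2, cubeVar]
        ring

/-- Mix: take coordinates in `S` from `y`, the rest from `x`. -/
def mix (S : Finset (Fin d)) (x y : Fin d → Bool) : Fin d → Bool :=
  fun j => if j ∈ S then y j else x j

lemma mix_mix (S : Finset (Fin d)) (x y : Fin d → Bool) :
    mix S (mix S x y) (mix S y x) = x := by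
  funext j; unfold mix; by_cases h : j ∈ S <;> simp [h]

lemma doubleAvg (S : Finset (Fin d)) (F : (Fin d → Bool) → ℝ) :
    cubeMean (fun x => cubeMean (fun y => F (mix S x y))) = cubeMean F := by
  have hbij : Function.Bijective
      (fun p : (Fin d → Bool) × (Fin d → Bool) => (mix S p.1 p.2, mix S p.2 p.1)) :=
    Function.Involutive.bijective (fun p => Prod.ext (mix_mix S p.1 p.2) (mix_mix S p.2 p.1))
  have key : (∑ x : Fin d → Bool, ∑ y : Fin d → Bool, F (mix S x y))
      = ∑ x : Fin d → Bool, ∑ _y : Fin d → Bool, F x := by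
    rw [← Fintype.sum_prod_type', ← Fintype.sum_prod_type']
    exact Fintype.sum_bijective _ hbij _ (fun q => F q.1) (fun p => rfl)
  have key2 : (∑ x : Fin d → Bool, (∑ y : Fin d → Bool, F (mix S x y)) / 2^d)
      = (∑ x : Fin d → Bool, F x) := by
    rw [← Finset.sum_div, key]
    simp only [Finset.sum_const, Finset.card_univ, Fintype.card_fun, Fintype.card_bool,
      Fintype.card_fin, nsmul_eq_mul, Nat.cast_pow, Nat.cast_ofNat, ← Finset.mul_sum]
    exact mul_div_cancel_left₀ _ (by positivity : ((2:ℝ)^d) ≠ 0)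
  simp only [cubeMean]
  rw [key2]

lemma pointwise_bound (Sstar : Finset (Fin d)) (f0 g : (Fin d → Bool) → ℝ)
    (hsparse : ∀ x x' : Fin d → Bool, (∀ j ∈ Sstar, x j = x' j) → f0 x = f0 x')
    (E : (Fin d → Bool) → Prop) [DecidablePred E]
    (hloc : ∀ x x', ¬ E x → (∀ j, j ∉ Sstar → x j = x' j) → g x = g x') :
    (1 - cubeMean (fun x => if E x then (1:ℝ) else 0)) * cubeVar f0 ≤ cubeRisk g f0 := by
  have hrisk : cubeRisk g f0
      = cubeMean (fun x => cubeMean (fun y => (g (mix Sstar x y) - f0 (mix Sstar x y))^2)) :=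
    (doubleAvg Sstar _).symm
  have hpt : ∀ x, (1 - (if E x then (1:ℝ) else 0)) * cubeVar f0
      ≤ cubeMean (fun y => (g (mix Sstar x y) - f0 (mix Sstar x y))^2) := by
    intro x
    by_cases hx : E x
    · simp only [hx, if_pos, sub_self, zero_mul]
      exact cubeMean_nonneg fun y => sq_nonneg _
    · simp only [hx, if_neg, not_false_iff, sub_zero, one_mul]
      have hg : ∀ y, g (mix Sstar x y) = g x :=
        fun y => (hloc x (mix Sstar x y) hx (fun j hj => by simp [mix, hj])).symm
      have hf : ∀ y, f0 (mix Sstar x y) = f0 y :=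
        fun y => hsparse _ _ (fun j hj => by simp [mix, hj])
      calc cubeVar f0 ≤ cubeMean (fun y => (g x - f0 y)^2) := var_le_mean_sq f0 (g x)
        _ = cubeMean (fun y => (g (mix Sstar x y) - f0 (mix Sstar x y))^2) := by
            simp only [hg, hf]
  calc (1 - cubeMean (fun x => if E x then (1:ℝ) else 0)) * cubeVar f0
      = cubeMean (fun x => (1 - (if E x then (1:ℝ) else 0)) * cubeVar f0) := by
        rw [show (fun x => (1 - (if E x then (1:ℝ) else 0)) * cubeVar f0)
          = (fun x => (fun x => 1 - (if E x then (1:ℝ) else 0)) x * cubeVar f0) from rfl,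
          cubeMean_mul_const, cubeMean_sub, cubeMean_const]
    _ ≤ cubeMean (fun x => cubeMean (fun y => (g (mix Sstar x y) - f0 (mix Sstar x y))^2)) :=
        cubeMean_mono hpt
    _ = cubeRisk g f0 := hrisk.symm

end Helpers

/-- Covariate selection is necessary for small risk, tree
version.  For any regression tree model `fhat` with query-path split sets
`Jq`, the expected `L²` risk is at least `(1 - δ)·Var(f*₀(X))`, where
`δ := P{J(X; D_n, Θ) ∩ S* ≠ ∅}` with `X ∼ ν` independent of the data. -/
theorem covariate_selection_necessary_tree
    {Ω : Type} [MeasurableSpace Ω]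
    (μ : Measure Ω) [IsProbabilityMeasure μ]
    (d n s : ℕ)
    (X : Fin n → Ω → Fin d → Bool) (eps : Fin n → Ω → ℝ) (Y : Fin n → Ω → ℝ)
    (hXmeas : ∀ i, Measurable (X i)) (hepsmeas : ∀ i, Measurable (eps i))
    (hXunif : ∀ i, Measure.map (X i) μ = (PMF.uniformOfFintype (Fin d → Bool)).toMeasure)
    (hXiid : iIndepFun X μ)
    (hepsiid : iIndepFun eps μ)
    (hepsident : ∀ i j, Measure.map (eps i) μ = Measure.map (eps j) μ)
    (hepsint : ∀ i, Integrable (eps i) μ)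
    (hepsmean : ∀ i, ∫ ω, eps i ω ∂μ = 0)
    (hXeps : IndepFun (fun ω i => X i ω) (fun ω i => eps i ω) μ)
    (Sstar : Finset (Fin d)) (hcard : Sstar.card = s)
    (f0 : (Fin d → Bool) → ℝ)
    (hsparse : ∀ x x' : Fin d → Bool, (∀ j ∈ Sstar, x j = x' j) → f0 x = f0 x')
    (hY : ∀ i ω, Y i ω = f0 (X i ω) + eps i ω)
    (fhat : Ω → (Fin d → Bool) → ℝ)
    (Jq : Ω → (Fin d → Bool) → Finset (Fin d))
    (hfmeas : ∀ x, Measurable fun ω => fhat ω x)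
    (hJmeas : ∀ x, MeasurableSet {ω | ((Jq ω x) ∩ Sstar).Nonempty})
    -- on the event `J(x) ∩ S* = ∅` the prediction does not change when the
    -- coordinates of `x` in `S*` are changed
    (hloc : ∀ ω x x', ¬ ((Jq ω x) ∩ Sstar).Nonempty → (∀ j, j ∉ Sstar → x j = x' j) →
        fhat ω x = fhat ω x')
    -- the event depends on `x` only through `x_{[d] ∖ S*}`
    (hev : ∀ ω x x', (∀ j, j ∉ Sstar → x j = x' j) →
        (((Jq ω x) ∩ Sstar).Nonempty ↔ ((Jq ω x') ∩ Sstar).Nonempty)) :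
    ENNReal.ofReal
        ((1 - cubeMean fun x => (μ {ω | ((Jq ω x) ∩ Sstar).Nonempty}).toReal) *
          cubeVar f0) ≤
      ∫⁻ ω, ENNReal.ofReal (cubeRisk (fhat ω) f0) ∂μ := by
  classical
  have hpt : ∀ ω, (1 - cubeMean (fun x => if ((Jq ω x) ∩ Sstar).Nonempty then (1:ℝ) else 0)) * cubeVar f0
      ≤ cubeRisk (fhat ω) f0 := fun ω =>
    pointwise_bound Sstar f0 (fhat ω) hsparse _ (fun x x' => hloc ω x x')
  set V := cubeVar f0 with hV
  set p : Ω → ℝ := fun ω => cubeMean (fun x => if ((Jq ω x) ∩ Sstar).Nonempty then (1:ℝ) else 0) with hp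
  have hindeq : ∀ x : Fin d → Bool, (fun ω => if ((Jq ω x) ∩ Sstar).Nonempty then (1:ℝ) else 0)
      = Set.indicator {ω | ((Jq ω x) ∩ Sstar).Nonempty} (fun _ => 1) := by
    intro x; funext ω
    by_cases h : ((Jq ω x) ∩ Sstar).Nonempty <;> simp [Set.indicator_apply, h]
  have hind : ∀ x : Fin d → Bool,
      Integrable (fun ω => if ((Jq ω x) ∩ Sstar).Nonempty then (1:ℝ) else 0) μ := by
    intro x; rw [hindeq x]
    exact (integrable_const (1:ℝ)).indicator (hJmeas x)
  have hip : Integrable p μ := by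
    simp only [hp, cubeMean]
    exact (integrable_finset_sum _ (fun x _ => hind x)).div_const _
  have hVnn : 0 ≤ V := cubeVar_nonneg f0
  have hple : ∀ ω, p ω ≤ 1 := by
    intro ω
    have h := cubeMean_mono (f := fun x => if ((Jq ω x) ∩ Sstar).Nonempty then (1:ℝ) else 0)
      (g := fun _ => 1) (fun x => by by_cases h : ((Jq ω x) ∩ Sstar).Nonempty <;> simp [h])
    simpa [cubeMean_const] using h
  have hnn : ∀ ω, 0 ≤ (1 - p ω) * V := fun ω => mul_nonneg (by linarith [hple ω]) hVnn
  have hint : Integrable (fun ω => (1 - p ω) * V) μ := ((integrable_const 1).sub hip).mul_const V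
  have hi2 : ∫ ω, p ω ∂μ = cubeMean fun x => (μ {ω | ((Jq ω x) ∩ Sstar).Nonempty}).toReal := by
    simp only [hp, cubeMean]
    rw [integral_div, integral_finset_sum _ (fun x _ => hind x)]
    congr 1
    refine Finset.sum_congr rfl (fun x _ => ?_)
    rw [hindeq x, integral_indicator_const (1:ℝ) (hJmeas x), smul_eq_mul, mul_one, measureReal_def]
  have hi1 : ∫ ω, (1 - p ω) * V ∂μ
      = (1 - cubeMean fun x => (μ {ω | ((Jq ω x) ∩ Sstar).Nonempty}).toReal) * V := by
    rw [integral_mul_const, integral_sub (integrable_const 1) hip, integral_const, hi2]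
    simp
  calc ENNReal.ofReal ((1 - cubeMean fun x => (μ {ω | ((Jq ω x) ∩ Sstar).Nonempty}).toReal) * V)
      = ENNReal.ofReal (∫ ω, (1 - p ω) * V ∂μ) := by rw [hi1]
    _ ≤ ∫⁻ ω, ENNReal.ofReal ((1 - p ω) * V) ∂μ :=
        le_of_eq (ofReal_integral_eq_lintegral_ofReal hint (Filter.Eventually.of_forall hnn))
    _ ≤ ∫⁻ ω, ENNReal.ofReal (cubeRisk (fhat ω) f0) ∂μ :=
        lintegral_mono fun ω => ENNReal.ofReal_le_ofReal (hpt ω)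

end GreedyTrees
end
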